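/- arXiv:1308.2113 — 4 statements merged into one kernel-verified Lean document; each statement's English description precedes it below -/
import Mathlib

section
/- Let K ⊂ ℝ² be a nondegenerate triangle with edge lengths A, B, C and area S. Then A²B²C²/(16S²) > (A² + B² + C²)/30 + (S²/5)(1/A² + 1/B² + 1/C²); in particular the constant C(K) := √(A²B²C²/(16S²) − (A² + B² + C²)/30 − (S²/5)(1/A² + 1/B² + 1/C²)) is a well-defined positive real number and satisfies C(K) < R_K, where R_K = ABC/(4S) is the circumradius of K. -/
noncomputable section
open MeasureTheory Real Filter
open scoped ENNReal

/-- The Euclidean plane `ℝ²`. -/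
abbrev E2 : Type := EuclideanSpace ℝ (Fin 2)

/-- `f'` is a weak (distributional) derivative of `f` on the set `U ⊆ ℝ²`:
integration by parts against all smooth test functions compactly supported in `U`. -/
def IsWeakFDerivOn {F : Type} [NormedAddCommGroup F] [NormedSpace ℝ F]
    (U : Set E2) (f : E2 → F) (f' : E2 → (E2 →L[ℝ] F)) : Prop :=
  ∀ φ : E2 → ℝ, ContDiff ℝ (⊤ : ℕ∞) φ → HasCompactSupport φ → tsupport φ ⊆ U →
    ∫ x in U, φ x • f' x = - ∫ x in U, (fderiv ℝ φ x).smulRight (f x)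

/-- The (closed) triangle with vertices `p 0`, `p 1`, `p 2`. -/
def Tri (p : Fin 3 → E2) : Set E2 := convexHull ℝ (Set.range p)

/-- The circumradius of a nondegenerate triangle. -/
def circumradius3 (p : Fin 3 → E2) (hp : AffineIndependent ℝ p) : ℝ :=
  (Affine.Simplex.mk p hp).circumradius

/-- The standard basis vectors of `ℝ²`. -/
def e2 (i : Fin 2) : E2 := EuclideanSpace.single i 1

/-- Squared Euclidean norm of the gradient (represented as a continuous linear functional). -/
def gradNormSq (a : E2 →L[ℝ] ℝ) : ℝ := ∑ i, (a (e2 i))^2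

/-- Squared Frobenius norm of the Hessian (all second derivatives). -/
def hessNormSq (H : E2 →L[ℝ] E2 →L[ℝ] ℝ) : ℝ := ∑ i, ∑ j, (H (e2 i) (e2 j))^2

/-- The point `(x, y) ∈ ℝ²`. -/
def pt (x y : ℝ) : E2 := WithLp.toLp 2 ![x, y]

/-- The (unsigned) area of the triangle with vertices `p 0`, `p 1`, `p 2`. -/
def triArea (p : Fin 3 → E2) : ℝ :=
  |(p 1 0 - p 0 0) * (p 2 1 - p 0 1) - (p 1 1 - p 0 1) * (p 2 0 - p 0 0)| / 2


set_option maxHeartbeats 1000000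

lemma kobayashi_key (x y z a b c s : ℝ) (hx : 0 < x) (hy : 0 < y) (hz : 0 < z)
    (ha : a = ((y+z)/2)^2) (hb : b = ((z+x)/2)^2) (hc : c = ((x+y)/2)^2)
    (hs : s = (x+y+z)*x*y*z) :
    0 < 240*(a*b*c)^2 - 8*(a*b*c)*s*(a+b+c) - 3*s^2*(a*b+b*c+c*a) := by
  subst ha hb hc hs
  have hQ : 0 < 15*y^4*z^8 + 60*y^5*z^7 + 90*y^6*z^6 + 60*y^7*z^5 + 15*y^8*z^4 + 44*x*y^3*z^8 + 236*x*y^4*z^7 + 488*x*y^5*z^6 + 488*x*y^6*z^5 + 236*x*y^7*z^4 + 44*x*y^8*z^3 + 10*x^2*y^2*z^8 + 216*x^2*y^3*z^7 + 742*x^2*y^4*z^6 + 1072*x^2*y^5*z^5 + 742*x^2*y^6*z^4 + 216*x^2*y^7*z^3 + 10*x^2*y^8*z^2 + 44*x^3*y*z^8 + 216*x^3*y^2*z^7 + 592*x^3*y^3*z^6 + 908*x^3*y^4*z^5 + 908*x^3*y^5*z^4 + 592*x^3*y^6*z^3 + 216*x^3*y^7*z^2 + 44*x^3*y^8*z + 15*x^4*z^8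 + 236*x^4*y*z^7 + 742*x^4*y^2*z^6 + 908*x^4*y^3*z^5 + 726*x^4*y^4*z^4 + 908*x^4*y^5*z^3 + 742*x^4*y^6*z^2 + 236*x^4*y^7*z + 15*x^4*y^8 + 60*x^5*z^7 + 488*x^5*y*z^6 + 1072*x^5*y^2*z^5 + 908*x^5*y^3*z^4 + 908*x^5*y^4*z^3 + 1072*x^5*y^5*z^2 + 488*x^5*y^6*z + 60*x^5*y^7 + 90*x^6*z^6 + 488*x^6*y*z^5 + 742*x^6*y^2*z^4 + 592*x^6*y^3*z^3 + 742*x^6*y^4*z^2 + 488*x^6*y^5*z + 90*x^6*y^6 + 60*x^7*z^5 + 236*x^7*y*z^4 + 216*x^7*y^2*z^3 + 216*x^7*y^3*z^2 + 236*x^7*y^4*z + 60*x^7*y^5 + 15*x^8*z^4 + 44*x^8*y*z^3 + 10*x^8*y^2*z^2 + 44*x^8*y^3*z + 15*x^8*y^4 := by positivity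
  have hid : 256*(240*((((y+z)/2)^2*((z+x)/2)^2*((x+y)/2)^2)^2)
      - 8*(((y+z)/2)^2*((z+x)/2)^2*((x+y)/2)^2)*((x+y+z)*x*y*z)*(((y+z)/2)^2+((z+x)/2)^2+((x+y)/2)^2)
      - 3*((x+y+z)*x*y*z)^2*(((y+z)/2)^2*((z+x)/2)^2+((z+x)/2)^2*((x+y)/2)^2+((x+y)/2)^2*((y+z)/2)^2))
      = 15*y^4*z^8 + 60*y^5*z^7 + 90*y^6*z^6 + 60*y^7*z^5 + 15*y^8*z^4 + 44*x*y^3*z^8 + 236*x*y^4*z^7 + 488*x*y^5*z^6 + 488*x*y^6*z^5 + 236*x*y^7*z^4 + 44*x*y^8*z^3 + 10*x^2*y^2*z^8 + 216*x^2*y^3*z^7 + 742*x^2*y^4*z^6 + 1072*x^2*y^5*z^5 + 742*x^2*y^6*z^4 + 216*x^2*y^7*z^3 + 10*x^2*y^8*z^2 + 44*x^3*y*z^8 + 216*x^3*y^2*z^7 + 592*x^3*y^3*z^6 + 908*x^3*y^4*z^5 + 908*x^3*y^5*z^4 + 592*x^3*y^6*z^3 + 216*x^3*y^7*z^2 + 44*x^3*y^8*z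 + 15*x^4*z^8 + 236*x^4*y*z^7 + 742*x^4*y^2*z^6 + 908*x^4*y^3*z^5 + 726*x^4*y^4*z^4 + 908*x^4*y^5*z^3 + 742*x^4*y^6*z^2 + 236*x^4*y^7*z + 15*x^4*y^8 + 60*x^5*z^7 + 488*x^5*y*z^6 + 1072*x^5*y^2*z^5 + 908*x^5*y^3*z^4 + 908*x^5*y^4*z^3 + 1072*x^5*y^5*z^2 + 488*x^5*y^6*z + 60*x^5*y^7 + 90*x^6*z^6 + 488*x^6*y*z^5 + 742*x^6*y^2*z^4 + 592*x^6*y^3*z^3 + 742*x^6*y^4*z^2 + 488*x^6*y^5*z + 90*x^6*y^6 + 60*x^7*z^5 + 236*x^7*y*z^4 + 216*x^7*y^2*z^3 + 216*x^7*y^3*z^2 + 236*x^7*y^4*z + 60*x^7*y^5 + 15*x^8*z^4 + 44*x^8*y*z^3 + 10*x^8*y^2*z^2 + 44*x^8*y^3*z + 15*x^8*y^4 := by ring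
  linarith

lemma det_ne_zero (p : Fin 3 → E2) (hp : AffineIndependent ℝ p) :
    (p 1 0 - p 0 0) * (p 2 1 - p 0 1) - (p 1 1 - p 0 1) * (p 2 0 - p 0 0) ≠ 0 := by
  intro hdet
  rw [affineIndependent_iff] at hp
  have contra : ∀ s t : ℝ, s*(p 1 0 - p 0 0) + t*(p 2 0 - p 0 0) = 0 →
      s*(p 1 1 - p 0 1) + t*(p 2 1 - p 0 1) = 0 → s = 0 ∧ t = 0 := by
    intro s t h0 h1
    have hw := hp Finset.univ ![-s-t, s, t]
      (by simp [Fin.sum_univ_three]; ring)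
      (by
        refine PiLp.ext fun i => ?_
        fin_cases i <;>
          simp [Fin.sum_univ_three, PiLp.add_apply, PiLp.smul_apply, smul_eq_mul] <;>
          linarith)
    refine ⟨?_, ?_⟩
    · have := hw 1 (Finset.mem_univ _); simpa using this
    · have := hw 2 (Finset.mem_univ _); simpa using this
  have c1 := contra (p 2 1 - p 0 1) (-(p 1 1 - p 0 1)) (by linear_combination hdet) (by ring)
  have c2 := contra (p 2 0 - p 0 0) (-(p 1 0 - p 0 0)) (by ring)
      (by linear_combination (-(p 2 0 - p 0 0))*c1.2 - (p 1 0 - p 0 0)*c1.1)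
  have c3 := contra 1 0 (by linear_combination -c2.2) (by linear_combination -c1.2)
  exact absurd c3.1 one_ne_zero


/-- For a nondegenerate triangle with edge lengths `A`, `B`, `C` and area `S`,
the quantity under the square root in Kobayashi's constant is positive, so
`C(K) = √(A²B²C²/(16S²) − (A²+B²+C²)/30 − (S²/5)(1/A²+1/B²+1/C²))` is a well-defined
positive real number, and `C(K) < R_K = ABC/(4S)`, the circumradius. -/
theorem circumradius_gt_kobayashi_const (p : Fin 3 → E2) (hp : AffineIndependent ℝ p)
    (A B C S : ℝ)
    (hA : A = dist (p 1) (p 2)) (hB : B = dist (p 2) (p 0)) (hC : C = dist (p 0) (p 1))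
    (hS : S = triArea p) :
    (A^2 + B^2 + C^2)/30 + S^2/5 * (1/A^2 + 1/B^2 + 1/C^2) < A^2*B^2*C^2/(16*S^2) ∧
    0 < Real.sqrt (A^2*B^2*C^2/(16*S^2) - (A^2 + B^2 + C^2)/30
        - S^2/5 * (1/A^2 + 1/B^2 + 1/C^2)) ∧
    Real.sqrt (A^2*B^2*C^2/(16*S^2) - (A^2 + B^2 + C^2)/30
        - S^2/5 * (1/A^2 + 1/B^2 + 1/C^2)) < A*B*C/(4*S) := by

  -- positivity of the side lengths
  have hA0 : 0 < A := hA ▸ dist_pos.mpr (hp.injective.ne (by decide : (1 : Fin 3) ≠ 2))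
  have hB0 : 0 < B := hB ▸ dist_pos.mpr (hp.injective.ne (by decide : (2 : Fin 3) ≠ 0))
  have hC0 : 0 < C := hC ▸ dist_pos.mpr (hp.injective.ne (by decide : (0 : Fin 3) ≠ 1))
  -- positivity of the area
  have hS0 : 0 < S := by
    rw [hS, triArea]
    exact div_pos (abs_pos.mpr (det_ne_zero p hp)) two_pos
  -- squared side lengths in coordinates
  have ha2 : A^2 = (p 1 0 - p 2 0)^2 + (p 1 1 - p 2 1)^2 := by
    rw [hA, EuclideanSpace.dist_eq, Real.sq_sqrt (by positivity)]
    simp [Fin.sum_univ_two, Real.dist_eq, sq_abs]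
  have hb2 : B^2 = (p 2 0 - p 0 0)^2 + (p 2 1 - p 0 1)^2 := by
    rw [hB, EuclideanSpace.dist_eq, Real.sq_sqrt (by positivity)]
    simp [Fin.sum_univ_two, Real.dist_eq, sq_abs]
  have hc2 : C^2 = (p 0 0 - p 1 0)^2 + (p 0 1 - p 1 1)^2 := by
    rw [hC, EuclideanSpace.dist_eq, Real.sq_sqrt (by positivity)]
    simp [Fin.sum_univ_two, Real.dist_eq, sq_abs]
  have hs2 : S^2 = ((p 1 0 - p 0 0) * (p 2 1 - p 0 1) - (p 1 1 - p 0 1) * (p 2 0 - p 0 0))^2/4 := by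
    rw [hS, triArea, div_pow, sq_abs]
    norm_num
  -- Heron's formula
  have heron : 16*S^2 = 2*A^2*B^2+2*B^2*C^2+2*C^2*A^2-(A^2)^2-(B^2)^2-(C^2)^2 := by
    rw [ha2, hb2, hc2, hs2]; ring
  have hS2 : 0 < S^2 := pow_pos hS0 2
  -- strict triangle inequalities
  have hx : 0 < -A+B+C := by
    by_contra h
    push_neg at h
    have h1 : 0 < A-B+C := by linarith
    have h2 : 0 < A+B-C := by linarith
    nlinarith [mul_pos (mul_pos (show (0:ℝ) < A+B+C by linarith) h1) h2, hS2, heron]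
  have hy : 0 < A-B+C := by
    by_contra h
    push_neg at h
    have h1 : 0 < -A+B+C := by linarith
    have h2 : 0 < A+B-C := by linarith
    nlinarith [mul_pos (mul_pos (show (0:ℝ) < A+B+C by linarith) h1) h2, hS2, heron]
  have hz : 0 < A+B-C := by
    by_contra h
    push_neg at h
    have h1 : 0 < -A+B+C := by linarith
    have h2 : 0 < A-B+C := by linarith
    nlinarith [mul_pos (mul_pos (show (0:ℝ) < A+B+C by linarith) h1) h2, hS2, heron]
  -- the key polynomial inequality
  have hk := kobayashi_key (-A+B+C) (A-B+C) (A+B-C) (A^2) (B^2) (C^2) (16*S^2)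
    hx hy hz (by ring) (by ring) (by ring) (by linear_combination heron)
  -- rewrite the main difference as a positive fraction
  have hfrac : A^2*B^2*C^2/(16*S^2) - ((A^2 + B^2 + C^2)/30 + S^2/5 * (1/A^2 + 1/B^2 + 1/C^2))
      = (240*(A^2*B^2*C^2)^2 - 8*(A^2*B^2*C^2)*(16*S^2)*(A^2+B^2+C^2)
        - 3*(16*S^2)^2*(A^2*B^2+B^2*C^2+C^2*A^2)) / (240*(A^2*B^2*C^2)*(16*S^2)) := by
    field_simp
    ring
  have hpos := div_pos hk (by positivity : (0:ℝ) < 240*(A^2*B^2*C^2)*(16*S^2))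
  have h1 : (A^2 + B^2 + C^2)/30 + S^2/5 * (1/A^2 + 1/B^2 + 1/C^2) < A^2*B^2*C^2/(16*S^2) := by
    linarith [hfrac ▸ hpos]
  refine ⟨h1, Real.sqrt_pos.mpr (by linarith), ?_⟩
  rw [Real.sqrt_lt' (by positivity : (0:ℝ) < A*B*C/(4*S))]
  have hsq : (A*B*C/(4*S))^2 = A^2*B^2*C^2/(16*S^2) := by
    field_simp
    ring
  rw [hsq]
  have hu : 0 < (A^2 + B^2 + C^2)/30 := by positivity
  have hv : 0 < S^2/5 * (1/A^2 + 1/B^2 + 1/C^2) := by positivity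
  linarith
end
end

section
/- For 0 < h < 1 and 1 < α < 2, let K_h ⊂ ℝ² be the isosceles triangle with base of length h and apex at height h^α above the midpoint of the base (so h^α < h). Then the circumradius of K_h equals R_{K_h} = h^α/2 + h^{2−α}/8, and R_{K_h} → 0 as h → 0⁺, while the maximum interior angle of K_h (the apex angle) tends to π as h → 0⁺. In particular the family {K_h} violates every maximum angle condition yet satisfies the circumradius condition. -/
noncomputable section
open MeasureTheory Real Filter
open scoped ENNReal

lemma dist_pt (a b c d : ℝ) : dist (pt a b) (pt c d) = Real.sqrt ((a-c)^2 + (b-d)^2) := by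
  rw [EuclideanSpace.dist_eq]
  simp [pt, Fin.sum_univ_two, Real.dist_eq, sq_abs]


lemma inner_pt (a b c d : ℝ) : (inner ℝ (pt a b) (pt c d) : ℝ) = a*c + b*d := by
  simp [pt, PiLp.inner_apply, Fin.sum_univ_two, RCLike.inner_apply]
  ring

lemma norm_pt (a b : ℝ) : ‖pt a b‖ = Real.sqrt (a^2 + b^2) := by
  rw [EuclideanSpace.norm_eq]
  simp [pt, Fin.sum_univ_two, sq_abs]

lemma vsub_pt (a b c d : ℝ) : pt a b -ᵥ pt c d = pt (a-c) (b-d) := by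
  ext i
  fin_cases i <;> simp [pt, vsub_eq_sub]

lemma rpow_tendsto {c : ℝ} (hc : 0 < c) :
    Tendsto (fun h : ℝ => h ^ c) (nhdsWithin 0 (Set.Ioi 0)) (nhds 0) := by
  have := (Real.continuousAt_rpow_const 0 c (Or.inr hc.le)).tendsto
  rw [Real.zero_rpow hc.ne'] at this
  exact this.mono_left nhdsWithin_le_nhds


/-- For `0 < h < 1` and `1 < α < 2`, let `K_h` be the isosceles triangle with
base of length `h` and apex at height `h^α` above the midpoint of the base (so `h^α < h`).
Its circumradius is `R_{K_h} = h^α/2 + h^{2−α}/8`, which tends to `0` as `h → 0⁺`, while the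
maximum interior angle of `K_h` (the apex angle) tends to `π` as `h → 0⁺`: the family
violates every maximum angle condition but satisfies the circumradius condition. -/
theorem flat_isosceles_family (α : ℝ) (hα1 : 1 < α) (hα2 : α < 2)
    (p : ℝ → Fin 3 → E2)
    (hdef : ∀ h : ℝ, p h 0 = pt (-(h/2)) 0 ∧ p h 1 = pt (h/2) 0 ∧ p h 2 = pt 0 (h ^ α))
    (hind : ∀ h ∈ Set.Ioo (0:ℝ) 1, AffineIndependent ℝ (p h)) :
    (∀ h : ℝ, 0 < h → h < 1 → h ^ α < h) ∧
    (∀ h, ∀ hh : h ∈ Set.Ioo (0:ℝ) 1,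
      circumradius3 (p h) (hind h hh) = h ^ α / 2 + h ^ (2 - α) / 8) ∧
    Tendsto (fun h : ℝ => h ^ α / 2 + h ^ (2 - α) / 8) (nhdsWithin 0 (Set.Ioi 0)) (nhds 0) ∧
    Tendsto (fun h : ℝ => EuclideanGeometry.angle (p h 0) (p h 2) (p h 1))
      (nhdsWithin 0 (Set.Ioi 0)) (nhds π) := by
  refine ⟨?_, ?_, ?_, ?_⟩
  · intro h h0 h1
    have := Real.rpow_lt_rpow_of_exponent_gt h0 h1 hα1
    simpa [Real.rpow_one] using this
  · intro h hh
    obtain ⟨h0, h1⟩ := hh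
    have hapos : 0 < h ^ α := Real.rpow_pos_of_pos h0 α
    have hbpos : 0 < h ^ (2 - α) := Real.rpow_pos_of_pos h0 _
    have hab : h ^ α * h ^ (2 - α) = h * h := by
      rw [← Real.rpow_add h0, show α + (2 - α) = (2:ℝ) by ring, Real.rpow_two, pow_two]
    set a := h ^ α
    set b := h ^ (2 - α)
    have hr0 : (0:ℝ) ≤ a / 2 + b / 8 := by positivity
    have hc : pt 0 (a/2 - b/8) ∈ affineSpan ℝ (Set.range (p h)) := by
      have htop : affineSpan ℝ (Set.range (p h)) = ⊤ := by
        rw [(hind h ⟨h0, h1⟩).affineSpan_eq_top_iff_card_eq_finrank_add_one]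
        simp
      rw [htop]; exact AffineSubspace.mem_top _ _ _
    have hdist : ∀ i, dist (p h i) (pt 0 (a/2 - b/8)) = a / 2 + b / 8 := by
      have d0 : dist (p h 0) (pt 0 (a/2 - b/8)) = a / 2 + b / 8 := by
        rw [(hdef h).1, dist_pt,
          show (-(h/2) - 0)^2 + (0 - (a/2 - b/8))^2 = (a/2 + b/8)^2 by
            linear_combination (-1/4 : ℝ) * hab]
        exact Real.sqrt_sq hr0
      have d1 : dist (p h 1) (pt 0 (a/2 - b/8)) = a / 2 + b / 8 := by
        rw [(hdef h).2.1, dist_pt,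
          show (h/2 - 0)^2 + (0 - (a/2 - b/8))^2 = (a/2 + b/8)^2 by
            linear_combination (-1/4 : ℝ) * hab]
        exact Real.sqrt_sq hr0
      have d2 : dist (p h 2) (pt 0 (a/2 - b/8)) = a / 2 + b / 8 := by
        rw [(hdef h).2.2, dist_pt,
          show ((0:ℝ) - 0)^2 + (a - (a/2 - b/8))^2 = (a/2 + b/8)^2 by ring]
        exact Real.sqrt_sq hr0
      intro i
      fin_cases i
      exacts [d0, d1, d2]
    exact ((Affine.Simplex.mk (p h) (hind h ⟨h0, h1⟩)).eq_circumradius_of_dist_eq hc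
      hdist).symm
  · have T1 := rpow_tendsto (c := α) (by linarith)
    have T2 := rpow_tendsto (c := 2 - α) (by linarith)
    have := (T1.div_const 2).add (T2.div_const 8)
    simpa using this
  · have hexp : 0 < 2*α - 2 := by linarith
    have T : Tendsto (fun h : ℝ => h ^ (2*α - 2)) (nhdsWithin 0 (Set.Ioi 0)) (nhds 0) :=
      rpow_tendsto hexp
    have c1 : Tendsto (fun t : ℝ => Real.arccos ((t - 1/4)/(t + 1/4))) (nhds 0) (nhds π) := by
      have hca : ContinuousAt (fun t : ℝ => Real.arccos ((t - 1/4)/(t + 1/4))) 0 := by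
        apply Real.continuous_arccos.continuousAt.comp
        apply ContinuousAt.div
        · fun_prop
        · fun_prop
        · norm_num
      have hv : ((0:ℝ) - 1/4)/((0:ℝ) + 1/4) = -1 := by norm_num
      simpa [hv, Real.arccos_neg_one] using hca.tendsto
    have Tg : Tendsto (fun h : ℝ => Real.arccos ((h ^ (2*α - 2) - 1/4)/(h ^ (2*α - 2) + 1/4)))
        (nhdsWithin 0 (Set.Ioi 0)) (nhds π) := c1.comp T
    refine Tg.congr' ?_
    filter_upwards [self_mem_nhdsWithin] with h hh
    have h0 : (0:ℝ) < h := hh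
    have hapos : 0 < h ^ α := Real.rpow_pos_of_pos h0 α
    have htpos : 0 < h ^ (2*α - 2) := Real.rpow_pos_of_pos h0 _
    have ha2 : h ^ α * h ^ α = h ^ (2*α - 2) * (h * h) := by
      rw [← Real.rpow_add h0, show α + α = (2*α - 2) + 1 + 1 by ring,
        Real.rpow_add h0, Real.rpow_add h0, Real.rpow_one, mul_assoc]
    have hu : p h 0 -ᵥ p h 2 = pt (-(h/2) - 0) (0 - h ^ α) := by
      rw [(hdef h).1, (hdef h).2.2, vsub_pt]
    have hv : p h 1 -ᵥ p h 2 = pt (h/2 - 0) (0 - h ^ α) := by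
      rw [(hdef h).2.1, (hdef h).2.2, vsub_pt]
    rw [EuclideanGeometry.angle, InnerProductGeometry.angle, hu, hv]
    congr 1
    rw [inner_pt, norm_pt, norm_pt,
      show (-(h/2) - 0)^2 + (0 - h ^ α)^2 = h^2/4 + h ^ α * h ^ α by ring,
      show (h/2 - 0)^2 + (0 - h ^ α)^2 = h^2/4 + h ^ α * h ^ α by ring,
      Real.mul_self_sqrt (by positivity)]
    rw [div_eq_div_iff (by positivity) (by positivity)]
    linear_combination ((-1/2 : ℝ)) * ha2
end
end

section
/- (Schwarz's example, circumradius) Let r > 0, H > 0 and positive integers m, n. The circumradius R(m,n) of each isosceles triangle in Schwarz's example (base length 2r sin(π/n), height √((H/m)² + r²(1 − cos(π/n))²)) equals ( H²/m + π²r²·(m/n²)·(sin(π/(2n))/(π/(2n)))² ) / ( 2√( H² + (π⁴r²/4)(m/n²)²(sin(π/(2n))/(π/(2n)))⁴ ) ). Moreover, for sequences m_k → ∞, n_k → ∞ of positive integers, R(m_k,n_k) → 0 if and only if m_k/n_k² → 0. -/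
noncomputable section
open MeasureTheory Real Filter
open scoped ENNReal

/-- The total area of the inscribed polygonal surface in Schwarz's example for the cylinder
of radius `r` and height `H`: `2mn` congruent isosceles triangles, each of base
`2r sin(π/n)` and height `√((H/m)² + r²(1 − cos(π/n))²)`. -/
def schwarzArea (r H : ℝ) (m n : ℕ) : ℝ :=
  2 * (m:ℝ) * (n:ℝ) * r * Real.sin (π / n) *
    Real.sqrt ((H / m)^2 + r^2 * (1 - Real.cos (π / n))^2)

/-- The circumradius of an isosceles triangle with base `b` and height `t`. -/
def isoCircumradius (b t : ℝ) : ℝ := t/2 + b^2/(8*t)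

/-- The circumradius of each isosceles triangle in Schwarz's example. -/
def schwarzCircumradius (r H : ℝ) (m n : ℕ) : ℝ :=
  isoCircumradius (2 * r * Real.sin (π / n))
    (Real.sqrt ((H / m)^2 + r^2 * (1 - Real.cos (π / n))^2))

/-- Auxiliary: positivity of `sin (π/(2n))` for `n ≥ 1`. -/
lemma schwarz_aux_sin_pos (n : ℕ) (hn : 0 < n) : 0 < Real.sin (π/(2*(n:ℝ))) := by
  have hn' : (0:ℝ) < n := by exact_mod_cast hn
  have h1n : (1:ℝ) ≤ n := by exact_mod_cast hn
  apply Real.sin_pos_of_pos_of_lt_pi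
  · positivity
  · rw [div_lt_iff₀ (by positivity)]
    nlinarith [pi_pos]

/-- Auxiliary: closed form of the Schwarz circumradius in terms of `u = m·sin²(π/(2n))`. -/
lemma schwarz_aux_keyA (r H : ℝ) (hr : 0 < r) (hH : 0 < H) (m n : ℕ) (hm : 0 < m) (hn : 0 < n) :
    schwarzCircumradius r H m n
      = (H^2/m + 4*r^2*((m:ℝ)*(Real.sin (π/(2*n)))^2))
        / (2*Real.sqrt (H^2 + 4*r^2*((m:ℝ)*(Real.sin (π/(2*n)))^2)^2)) := by
  have hm' : (0:ℝ) < m := by exact_mod_cast hm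
  have hn' : (0:ℝ) < n := by exact_mod_cast hn
  set θ : ℝ := π/(2*n) with hθdef
  have hθpos : 0 < θ := by positivity
  have h1n : (1:ℝ) ≤ n := by exact_mod_cast hn
  have hθlt : θ < π := by
    rw [hθdef, div_lt_iff₀ (by positivity)]
    nlinarith [pi_pos]
  have hπn : π/(n:ℝ) = 2*θ := by
    rw [hθdef]; field_simp
  set s : ℝ := Real.sin θ with hsdef
  set c : ℝ := Real.cos θ with hcdef
  have hs : 0 < s := Real.sin_pos_of_pos_of_lt_pi hθpos hθlt
  have hsc : s^2 + c^2 = 1 := Real.sin_sq_add_cos_sq θ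
  have hsin2 : Real.sin (π/n) = 2*s*c := by rw [hπn, Real.sin_two_mul]
  have hcos2 : 1 - Real.cos (π/n) = 2*s^2 := by
    rw [hπn, Real.cos_two_mul]; nlinarith [hsc]
  have hin : (H/m)^2 + r^2*(1 - Real.cos (π/n))^2 = H^2/m^2 + 4*r^2*s^4 := by
    rw [hcos2]; field_simp; ring
  set t : ℝ := Real.sqrt (H^2/m^2 + 4*r^2*s^4) with htdef
  have hinpos : 0 < H^2/m^2 + 4*r^2*s^4 := by positivity
  have ht : 0 < t := Real.sqrt_pos.2 hinpos
  have ht2 : t^2 = H^2/m^2 + 4*r^2*s^4 := Real.sq_sqrt hinpos.le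
  have hsqrt : Real.sqrt (H^2 + 4*r^2*((m:ℝ)*s^2)^2) = m*t := by
    have : H^2 + 4*r^2*((m:ℝ)*s^2)^2 = (m*t)^2 := by
      rw [show ((m:ℝ)*t)^2 = (m:ℝ)^2*t^2 by ring, ht2]; field_simp
    rw [this, Real.sqrt_sq (by positivity)]
  rw [schwarzCircumradius, isoCircumradius, hin, hsin2, hsqrt, ← htdef]
  rw [div_add_div _ _ (two_ne_zero) (by positivity), div_eq_div_iff (by positivity) (by positivity)]
  have hc2 : c^2 = 1 - s^2 := by linarith
  have hm0 : (m:ℝ) ≠ 0 := ne_of_gt hm'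
  have ht2' : (m:ℝ)^2 * t^2 = H^2 + 4*(m:ℝ)^2*r^2*s^4 := by
    rw [ht2]; field_simp
  field_simp
  linear_combination 8*ht2' + (32*(m:ℝ)^2*r^2*s^2)*hc2

/-- Auxiliary: `sin x / x → 1` as `x → 0` off `0`. -/
lemma schwarz_aux_sin_slope :
    Tendsto (fun y : ℝ => Real.sin y / y) (nhdsWithin 0 {(0:ℝ)}ᶜ) (nhds 1) := by
  have h : HasDerivAt Real.sin 1 0 := by simpa using Real.hasDerivAt_sin 0
  have := hasDerivAt_iff_tendsto_slope.1 h
  refine this.congr (fun y => ?_)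
  simp [slope_def_field]

/-- Auxiliary: `sin(π/(2 n_k)) / (π/(2 n_k)) → 1` when `n_k → ∞`. -/
lemma schwarz_aux_sinq (n : ℕ → ℕ) (hn : Tendsto n atTop atTop) :
    Tendsto (fun k => Real.sin (π/(2*(n k : ℝ))) / (π/(2*(n k : ℝ)))) atTop (nhds 1) := by
  have hn' : Tendsto (fun k => ((n k : ℝ))) atTop atTop := tendsto_natCast_atTop_atTop.comp hn
  have hx0 : Tendsto (fun k => π/(2*(n k : ℝ))) atTop (nhds 0) :=
    Tendsto.div_atTop tendsto_const_nhds (hn'.const_mul_atTop (by norm_num))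
  have hxne : ∀ᶠ k in atTop, π/(2*(n k : ℝ)) ∈ ({(0:ℝ)}ᶜ : Set ℝ) := by
    filter_upwards [hn.eventually_ge_atTop 1] with k hk
    have h1 : (1:ℝ) ≤ n k := by exact_mod_cast hk
    have h2 : 0 < π/(2*(n k : ℝ)) := by positivity
    simpa using ne_of_gt h2
  exact schwarz_aux_sin_slope.comp (tendsto_nhdsWithin_iff.2 ⟨hx0, hxne⟩)

/-- **Schwarz's example, circumradius.** For `r, H > 0` and positive integers
`m`, `n`, the circumradius `R(m,n)` of each isosceles triangle of Schwarz's example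
(base `2r sin(π/n)`, height `√((H/m)² + r²(1 − cos(π/n))²)`; its circumradius is
height/2 + base²/(8·height)) equals
`(H²/m + π²r²(m/n²)(sin(π/(2n))/(π/(2n)))²) / (2√(H² + (π⁴r²/4)(m/n²)²(sin(π/(2n))/(π/(2n)))⁴))`.
Moreover, for sequences of positive integers `m_k, n_k → ∞`, `R(m_k, n_k) → 0` if and only if
`m_k/n_k² → 0`. -/
theorem schwarz_circumradius (r H : ℝ) (hr : 0 < r) (hH : 0 < H) :
    (∀ m n : ℕ, 0 < m → 0 < n →
      schwarzCircumradius r H m n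
        = (H^2 / m + π^2 * r^2 * ((m:ℝ) / (n:ℝ)^2) *
              (Real.sin (π / (2*n)) / (π / (2*n)))^2)
          / (2 * Real.sqrt (H^2 + (π^4 * r^2 / 4) * ((m:ℝ) / (n:ℝ)^2)^2 *
              (Real.sin (π / (2*n)) / (π / (2*n)))^4))) ∧
    (∀ m n : ℕ → ℕ, Tendsto m atTop atTop → Tendsto n atTop atTop →
      (Tendsto (fun k => schwarzCircumradius r H (m k) (n k)) atTop (nhds 0) ↔
        Tendsto (fun k => (m k : ℝ) / (n k : ℝ)^2) atTop (nhds 0))) := by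
  have hπ : (0:ℝ) < π := pi_pos
  constructor
  · intro m n hm hn
    have hm' : (0:ℝ) < m := by exact_mod_cast hm
    have hn' : (0:ℝ) < n := by exact_mod_cast hn
    have e1 : π^2 * r^2 * ((m:ℝ)/(n:ℝ)^2) * (Real.sin (π/(2*n)) / (π/(2*n)))^2
        = 4*r^2*((m:ℝ)*(Real.sin (π/(2*n)))^2) := by
      field_simp
      ring
    have e2 : (π^4 * r^2 / 4) * ((m:ℝ)/(n:ℝ)^2)^2 * (Real.sin (π/(2*n)) / (π/(2*n)))^4
        = 4*r^2*((m:ℝ)*(Real.sin (π/(2*n)))^2)^2 := by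
      field_simp
      ring
    rw [schwarz_aux_keyA r H hr hH m n hm hn, e1, e2]
  · intro m n hmT hnT
    have hm' : Tendsto (fun k => ((m k : ℝ))) atTop atTop := tendsto_natCast_atTop_atTop.comp hmT
    set s : ℕ → ℝ := fun k => Real.sin (π/(2*(n k : ℝ))) with hsdef
    set u : ℕ → ℝ := fun k => (m k : ℝ) * (s k)^2 with hudef
    set q : ℕ → ℝ := fun k => s k / (π/(2*(n k : ℝ))) with hqdef
    have hq : Tendsto q atTop (nhds 1) := schwarz_aux_sinq n hnT
    have hev : ∀ᶠ k in atTop, 0 < m k ∧ 0 < n k :=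
      (hmT.eventually_gt_atTop 0).and (hnT.eventually_gt_atTop 0)
    have hR : ∀ᶠ k in atTop, schwarzCircumradius r H (m k) (n k)
        = (H^2/(m k : ℝ) + 4*r^2*(u k)) / (2*Real.sqrt (H^2 + 4*r^2*(u k)^2)) :=
      hev.mono fun k hk => schwarz_aux_keyA r H hr hH (m k) (n k) hk.1 hk.2
    have huk : ∀ k, 0 ≤ u k := fun k => by positivity
    have hueq2 : ∀ᶠ k in atTop, u k = (π^2/4) * ((m k : ℝ)/(n k : ℝ)^2) * (q k)^2 := by
      filter_upwards [hev] with k hk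
      have hnk : (0:ℝ) < n k := by exact_mod_cast hk.2
      simp only [hudef, hqdef]
      field_simp
      ring
    have hueq1 : ∀ᶠ k in atTop, (m k : ℝ)/(n k : ℝ)^2 = (4/π^2) * u k / (q k)^2 := by
      filter_upwards [hev] with k hk
      have hnk : (0:ℝ) < n k := by exact_mod_cast hk.2
      have hsk : 0 < s k := schwarz_aux_sin_pos (n k) hk.2
      simp only [hudef, hqdef]
      field_simp
      ring
    constructor
    · intro hRlim
      set G : ℕ → ℝ := fun k => (4*r^2*(u k)) / (2*Real.sqrt (H^2 + 4*r^2*(u k)^2)) with hGdef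
      have hXpos : ∀ k, 0 < H^2 + 4*r^2*(u k)^2 := fun k => by positivity
      have hG0 : ∀ k, 0 ≤ G k := fun k => by
        apply div_nonneg
        · have := huk k; positivity
        · positivity
      have hGR : ∀ᶠ k in atTop, G k ≤ schwarzCircumradius r H (m k) (n k) := by
        filter_upwards [hR, hev] with k hk1 hk2
        rw [hk1, hGdef]
        have hden : 0 < 2*Real.sqrt (H^2 + 4*r^2*(u k)^2) := by
          have := hXpos k
          have := Real.sqrt_pos.2 this
          positivity
        refine (div_le_div_iff_of_pos_right hden).mpr ?_
        have hmk : (0:ℝ) < (m k : ℝ) := by exact_mod_cast hk2.1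
        have h0 : 0 ≤ H^2/(m k : ℝ) := by positivity
        linarith
      have hGlim : Tendsto G atTop (nhds 0) :=
        tendsto_of_tendsto_of_tendsto_of_le_of_le' tendsto_const_nhds hRlim
          (Eventually.of_forall hG0) hGR
      have hw : Tendsto (fun k => (G k)^2) atTop (nhds 0) := by
        simpa using hGlim.pow 2
      have hweq : ∀ k, (G k)^2 * (H^2 + 4*r^2*(u k)^2) = 4*r^4*(u k)^2 := fun k => by
        have hX := hXpos k
        have hsq : Real.sqrt (H^2 + 4*r^2*(u k)^2)^2 = H^2 + 4*r^2*(u k)^2 :=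
          Real.sq_sqrt hX.le
        simp only [hGdef]
        rw [div_pow, mul_pow 2, hsq]
        field_simp
        ring
      have hwsmall : ∀ᶠ k in atTop, (G k)^2 < r^2/2 := hw.eventually_lt_const (by positivity)
      have hub : ∀ᶠ k in atTop, (u k)^2 ≤ (H^2/(2*r^4)) * (G k)^2 := by
        filter_upwards [hwsmall] with k hk
        have h1 := hweq k
        have h2 : 0 < r^4 := by positivity
        rw [← sub_nonneg]
        have h3 : (H^2/(2*r^4)) * (G k)^2 - (u k)^2
            = (H^2 * (G k)^2 - 2*r^4*(u k)^2) / (2*r^4) := by field_simp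
        rw [h3]
        apply div_nonneg _ (by positivity)
        have hp : (G k)^2 * (u k)^2 ≤ r^2/2 * (u k)^2 :=
          mul_le_mul_of_nonneg_right hk.le (sq_nonneg (u k))
        nlinarith [hp, h1, hr.le]
      have hu2 : Tendsto (fun k => (u k)^2) atTop (nhds 0) := by
        refine tendsto_of_tendsto_of_tendsto_of_le_of_le' tendsto_const_nhds ?_
          (Eventually.of_forall fun k => sq_nonneg _) hub
        simpa using tendsto_const_nhds.mul hw
      have hulim : Tendsto u atTop (nhds 0) := by
        have h1 : Tendsto (fun k => Real.sqrt ((u k)^2)) atTop (nhds 0) := by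
          have := (Real.continuous_sqrt.tendsto 0).comp hu2
          rw [Real.sqrt_zero] at this
          exact this
        exact h1.congr fun k => Real.sqrt_sq (huk k)
      have hfin : Tendsto (fun k => (4/π^2) * u k / (q k)^2) atTop (nhds 0) := by
        have hnum2 : Tendsto (fun k => (4/π^2) * u k) atTop (nhds 0) := by
          simpa using tendsto_const_nhds.mul hulim
        have hden2 : Tendsto (fun k => (q k)^2) atTop (nhds 1) := by
          simpa using hq.pow 2
        have := hnum2.div hden2 one_ne_zero
        rw [zero_div] at this
        exact this
      exact hfin.congr' (hueq1.mono fun k hk => hk.symm)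
    · intro hmn
      have hulim : Tendsto u atTop (nhds 0) := by
        have h1 : Tendsto (fun k => (π^2/4) * ((m k : ℝ)/(n k : ℝ)^2) * (q k)^2)
            atTop (nhds 0) := by
          simpa using (tendsto_const_nhds.mul hmn).mul (hq.pow 2)
        exact h1.congr' (hueq2.mono fun k hk => hk.symm)
      have hnum : Tendsto (fun k => H^2/(m k : ℝ) + 4*r^2*(u k)) atTop (nhds 0) := by
        have h1 : Tendsto (fun k => H^2/(m k : ℝ)) atTop (nhds 0) :=
          Tendsto.div_atTop tendsto_const_nhds hm'
        simpa using h1.add (tendsto_const_nhds.mul hulim)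
      have hX : Tendsto (fun k => H^2 + 4*r^2*(u k)^2) atTop (nhds (H^2)) := by
        have h0 : Tendsto (fun k => H^2 + 4*r^2*(u k)^2) atTop
            (nhds (H^2 + 4*r^2*(0:ℝ)^2)) :=
          (tendsto_const_nhds (x := H^2)).add
            ((tendsto_const_nhds (x := 4*r^2)).mul (hulim.pow 2))
        simpa using h0
      have hden : Tendsto (fun k => 2*Real.sqrt (H^2 + 4*r^2*(u k)^2)) atTop (nhds (2*H)) := by
        have h2 := (Real.continuous_sqrt.tendsto (H^2)).comp hX
        rw [Real.sqrt_sq hH.le] at h2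
        exact tendsto_const_nhds.mul h2
      have hfin := hnum.div hden (by positivity)
      rw [zero_div] at hfin
      exact hfin.congr' (hR.mono fun k hk => hk.symm)
end
end

section
/- (Equivalence in Schwarz's example) Let r > 0, H > 0, let A_E(m,n) := 2 m n r sin(π/n) √((H/m)² + r²(1 − cos(π/n))²) be the inscribed polygonal area and R(m,n) the circumradius of the constituent isosceles triangle (base 2r sin(π/n), height √((H/m)² + r²(1 − cos(π/n))²)). Then for any sequences of positive integers m_k → ∞, n_k → ∞, the following are equivalent: (a) A_E(m_k,n_k) → 2πrH; (b) m_k/n_k² → 0; (c) R(m_k,n_k) → 0. -/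
noncomputable section
open MeasureTheory Real Filter
open scoped ENNReal

section SchwarzAux


lemma one_sub_cos_bounds (n : ℕ) (hn : 1 ≤ n) :
    2/(n:ℝ)^2 ≤ 1 - Real.cos (π/n) ∧ 1 - Real.cos (π/n) ≤ π^2/(2*(n:ℝ)^2) := by
  have hn0 : (0:ℝ) < n := by exact_mod_cast hn
  have hx : |π/(n:ℝ)| ≤ π := by
    rw [abs_of_nonneg (by positivity)]
    rw [div_le_iff₀ hn0]
    nlinarith [pi_pos, (by exact_mod_cast hn : (1:ℝ) ≤ n)]
  constructor
  · have := Real.cos_le_one_sub_mul_cos_sq hx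
    have h2 : 2 / π^2 * (π/(n:ℝ))^2 = 2/(n:ℝ)^2 := by
      field_simp
    linarith [h2 ▸ this]
  · have := Real.one_sub_sq_div_two_le_cos (x := π/(n:ℝ))
    have h2 : (π/(n:ℝ))^2/2 = π^2/(2*(n:ℝ)^2) := by
      field_simp
    linarith [h2 ▸ this]

/-- `X → 0 ↔ m/n² → 0` where `X k = m k (1 - cos(π/n k))`. -/
lemma tendsto_X_iff_Y (m n : ℕ → ℕ) (hn : Tendsto n atTop atTop) :
    Tendsto (fun k => (m k : ℝ) * (1 - Real.cos (π / n k))) atTop (nhds 0) ↔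
    Tendsto (fun k => (m k : ℝ) / (n k : ℝ)^2) atTop (nhds 0) := by
  have hev : ∀ᶠ k in atTop, 1 ≤ n k := hn.eventually_ge_atTop 1
  have hYnn : ∀ k, 0 ≤ (m k : ℝ) / (n k : ℝ)^2 := fun k => by positivity
  have hXnn : ∀ᶠ k in atTop, 0 ≤ (m k : ℝ) * (1 - Real.cos (π / n k)) := by
    filter_upwards with k
    have := Real.cos_le_one (π / (n k : ℝ))
    have : (0:ℝ) ≤ 1 - Real.cos (π / n k) := by linarith
    positivity
  have hlow : ∀ᶠ k in atTop, 2 * ((m k : ℝ) / (n k : ℝ)^2) ≤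
      (m k : ℝ) * (1 - Real.cos (π / n k)) := by
    filter_upwards [hev] with k hk
    have h := (one_sub_cos_bounds (n k) hk).1
    have hn0 : (0:ℝ) < (n k:ℝ)^2 := by
      have : (0:ℝ) < n k := by exact_mod_cast hk
      positivity
    have hm0 : (0:ℝ) ≤ m k := Nat.cast_nonneg _
    calc 2 * ((m k : ℝ) / (n k : ℝ)^2) = (m k:ℝ) * (2/(n k:ℝ)^2) := by ring
      _ ≤ (m k : ℝ) * (1 - Real.cos (π / n k)) := by
          exact mul_le_mul_of_nonneg_left h hm0
  have hhigh : ∀ᶠ k in atTop, (m k : ℝ) * (1 - Real.cos (π / n k)) ≤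
      (π^2/2) * ((m k : ℝ) / (n k : ℝ)^2) := by
    filter_upwards [hev] with k hk
    have h := (one_sub_cos_bounds (n k) hk).2
    have hm0 : (0:ℝ) ≤ m k := Nat.cast_nonneg _
    calc (m k : ℝ) * (1 - Real.cos (π / n k)) ≤ (m k:ℝ) * (π^2/(2*(n k:ℝ)^2)) :=
          mul_le_mul_of_nonneg_left h hm0
      _ = (π^2/2) * ((m k : ℝ) / (n k : ℝ)^2) := by ring
  constructor
  · intro hX
    have hXhalf : Tendsto (fun k => (1/2 : ℝ) * ((m k : ℝ) * (1 - Real.cos (π / n k))))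
        atTop (nhds 0) := by simpa using hX.const_mul (1/2 : ℝ)
    exact squeeze_zero' (Eventually.of_forall hYnn)
      (hlow.mono fun k h => by linarith) hXhalf
  · intro hY
    apply squeeze_zero' hXnn hhigh
    have := hY.const_mul (π^2/2 : ℝ)
    simpa using this

/-- `n sin(π/n) → π`. -/
lemma tendsto_n_sin (n : ℕ → ℕ) (hn : Tendsto n atTop atTop) :
    Tendsto (fun k => (n k : ℝ) * Real.sin (π / n k)) atTop (nhds π) := by
  have hslope : Tendsto (fun x : ℝ => Real.sin x / x) (nhdsWithin 0 {0}ᶜ) (nhds 1) := by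
    have h := (Real.hasDerivAt_sin 0)
    rw [Real.cos_zero] at h
    have := hasDerivAt_iff_tendsto_slope.1 h
    refine this.congr fun x => ?_
    simp [slope_def_field]
  have hcast : Tendsto (fun k => (n k : ℝ)) atTop atTop :=
    tendsto_natCast_atTop_atTop.comp hn
  have hdiv : Tendsto (fun k => π / (n k : ℝ)) atTop (nhds 0) :=
    Tendsto.div_atTop tendsto_const_nhds hcast
  have hne : ∀ᶠ k in atTop, π / (n k : ℝ) ∈ ({0}ᶜ : Set ℝ) := by
    filter_upwards [hn.eventually_ge_atTop 1] with k hk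
    have hn0 : (0:ℝ) < n k := by exact_mod_cast hk
    simp only [Set.mem_compl_iff, Set.mem_singleton_iff]
    positivity
  have hinner : Tendsto (fun k => π / (n k : ℝ)) atTop (nhdsWithin 0 {0}ᶜ) :=
    tendsto_nhdsWithin_of_tendsto_nhds_of_eventually_within _ hdiv hne
  have hcomp := hslope.comp hinner
  have : Tendsto (fun k => π * (Real.sin (π / n k) / (π / n k))) atTop (nhds (π * 1)) :=
    (hcomp.const_mul π)
  rw [mul_one] at this
  refine this.congr' ?_
  filter_upwards [hn.eventually_ge_atTop 1] with k hk
  have hn0 : (0:ℝ) < n k := by exact_mod_cast hk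
  field_simp

lemma schwarzArea_eq (r H : ℝ) (hH : 0 < H) (m n : ℕ) (hm : 1 ≤ m) :
    schwarzArea r H m n = 2 * r * ((n:ℝ) * Real.sin (π / n)) *
      Real.sqrt (H^2 + r^2 * ((m:ℝ) * (1 - Real.cos (π / n)))^2) := by
  have hm0 : (0:ℝ) < m := by exact_mod_cast hm
  have key : (m:ℝ) * Real.sqrt ((H / m)^2 + r^2 * (1 - Real.cos (π / n))^2)
      = Real.sqrt (H^2 + r^2 * ((m:ℝ) * (1 - Real.cos (π / n)))^2) := by
    rw [← Real.sqrt_sq hm0.le, ← Real.sqrt_mul (by positivity)]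
    congr 1
    field_simp
    ring
    rw [Real.sq_sqrt (by positivity)]
  unfold schwarzArea
  rw [show 2 * (m:ℝ) * (n:ℝ) * r * Real.sin (π / n) *
      Real.sqrt ((H / m)^2 + r^2 * (1 - Real.cos (π / n))^2)
    = 2 * r * ((n:ℝ) * Real.sin (π / n)) *
      ((m:ℝ) * Real.sqrt ((H / m)^2 + r^2 * (1 - Real.cos (π / n))^2)) by ring, key]

lemma area_iff_X (r H : ℝ) (hr : 0 < r) (hH : 0 < H)
    (m n : ℕ → ℕ) (hm : Tendsto m atTop atTop) (hn : Tendsto n atTop atTop) :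
    Tendsto (fun k => schwarzArea r H (m k) (n k)) atTop (nhds (2 * π * r * H)) ↔
    Tendsto (fun k => (m k : ℝ) * (1 - Real.cos (π / n k))) atTop (nhds 0) := by
  set X : ℕ → ℝ := fun k => (m k : ℝ) * (1 - Real.cos (π / n k)) with hXdef
  have hg := tendsto_n_sin n hn
  have hmev : ∀ᶠ k in atTop, 1 ≤ m k := hm.eventually_ge_atTop 1
  have heq : ∀ᶠ k in atTop, schwarzArea r H (m k) (n k)
      = 2 * r * ((n k:ℝ) * Real.sin (π / n k)) * Real.sqrt (H^2 + r^2 * (X k)^2) := by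
    filter_upwards [hmev] with k hk
    exact schwarzArea_eq r H hH (m k) (n k) hk
  constructor
  · intro hA
    have hgpos : ∀ᶠ k in atTop, (0:ℝ) < (n k:ℝ) * Real.sin (π / n k) :=
      hg.eventually (eventually_gt_nhds pi_pos)
    have hden : Tendsto (fun k => 2 * r * ((n k:ℝ) * Real.sin (π / n k))) atTop
        (nhds (2 * r * π)) := hg.const_mul (2*r)
    have hne : (2 * r * π) ≠ 0 := by positivity
    have hs : Tendsto (fun k => schwarzArea r H (m k) (n k) /
        (2 * r * ((n k:ℝ) * Real.sin (π / n k)))) atTop (nhds (2 * π * r * H / (2 * r * π))) :=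
      hA.div hden hne
    have hlim : 2 * π * r * H / (2 * r * π) = H := by
      field_simp
    rw [hlim] at hs
    have hsqrt : Tendsto (fun k => Real.sqrt (H^2 + r^2 * (X k)^2)) atTop (nhds H) := by
      refine hs.congr' ?_
      filter_upwards [heq, hgpos] with k hk hkpos
      rw [hk]
      field_simp
      exact div_self hkpos.ne'
    have hsq : Tendsto (fun k => H^2 + r^2 * (X k)^2) atTop (nhds (H^2)) := by
      have h2 := hsqrt.pow 2
      refine Tendsto.congr (fun k => ?_) h2
      rw [Real.sq_sqrt (by positivity)]
    have hX2 : Tendsto (fun k => r^2 * (X k)^2) atTop (nhds 0) := by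
      have h := hsq.sub_const (H^2)
      rw [sub_self] at h
      exact (h.congr fun k => by ring)
    have hX2' : Tendsto (fun k => (X k)^2) atTop (nhds 0) := by
      have h := hX2.const_mul ((r^2)⁻¹)
      rw [mul_zero] at h
      exact h.congr fun k => by field_simp
    have hXnn : ∀ k, 0 ≤ X k := fun k => by
      have := Real.cos_le_one (π / (n k : ℝ))
      have h1 : (0:ℝ) ≤ 1 - Real.cos (π / n k) := by linarith
      exact mul_nonneg (Nat.cast_nonneg _) h1
    have h := hX2'.sqrt
    rw [Real.sqrt_zero] at h
    exact h.congr fun k => Real.sqrt_sq (hXnn k)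
  · intro hX
    have hF : Tendsto (fun x : ℝ => Real.sqrt (H^2 + r^2 * x^2)) (nhds 0) (nhds H) := by
      have hc : Continuous fun x : ℝ => Real.sqrt (H^2 + r^2 * x^2) := by fun_prop
      have := hc.tendsto 0
      simpa [Real.sqrt_sq hH.le] using this
    have hmain : Tendsto (fun k => 2 * r * ((n k:ℝ) * Real.sin (π / n k)) *
        Real.sqrt (H^2 + r^2 * (X k)^2)) atTop (nhds (2 * r * π * H)) :=
      (hg.const_mul (2*r)).mul (hF.comp hX)
    have : (2 : ℝ) * r * π * H = 2 * π * r * H := by ring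
    rw [this] at hmain
    exact hmain.congr' (heq.mono fun k hk => hk.symm)

set_option maxHeartbeats 1000000 in
lemma circ_iff_XY (r H : ℝ) (hr : 0 < r) (hH : 0 < H)
    (m n : ℕ → ℕ) (hm : Tendsto m atTop atTop) (hn : Tendsto n atTop atTop)
    (hXY : Tendsto (fun k => (m k : ℝ) * (1 - Real.cos (π / n k))) atTop (nhds 0) ↔
      Tendsto (fun k => (m k : ℝ) / (n k : ℝ)^2) atTop (nhds 0)) :
    Tendsto (fun k => schwarzCircumradius r H (m k) (n k)) atTop (nhds 0) ↔
    Tendsto (fun k => (m k : ℝ) / (n k : ℝ)^2) atTop (nhds 0) := by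
  set u : ℕ → ℝ := fun k => 1 - Real.cos (π / n k) with hu
  set t : ℕ → ℝ := fun k => Real.sqrt ((H / m k)^2 + r^2 * (u k)^2) with htdef
  set b : ℕ → ℝ := fun k => 2 * r * Real.sin (π / n k) with hbdef
  have hRval : ∀ k, schwarzCircumradius r H (m k) (n k) = t k / 2 + (b k)^2 / (8 * t k) :=
    fun k => rfl
  have hmev : ∀ᶠ k in atTop, 1 ≤ m k := hm.eventually_ge_atTop 1
  have hnev : ∀ᶠ k in atTop, 2 ≤ n k := hn.eventually_ge_atTop 2
  have hunn : ∀ k, 0 ≤ u k := fun k => by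
    have := Real.cos_le_one (π / (n k : ℝ)); simp only [hu]; linarith
  have htnn : ∀ k, 0 ≤ t k := fun k => Real.sqrt_nonneg _
  have htpos : ∀ᶠ k in atTop, 0 < t k := by
    filter_upwards [hmev] with k hk
    have hm0 : (0:ℝ) < m k := by exact_mod_cast hk
    have h1 : (0:ℝ) < (H / m k)^2 := by positivity
    exact Real.sqrt_pos.2 (by positivity)
  have htlb : ∀ k, H / m k ≤ t k := by
    intro k
    rw [htdef]
    have h1 : (H / m k)^2 ≤ (H / m k)^2 + r^2 * (u k)^2 :=
      le_add_of_nonneg_right (by positivity)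
    calc H / (m k:ℝ) = Real.sqrt ((H / m k)^2) := (Real.sqrt_sq (by positivity)).symm
      _ ≤ _ := Real.sqrt_le_sqrt h1
  have htub : ∀ k, t k ≤ H / m k + r * u k := by
    intro k
    have hpr : (0:ℝ) ≤ H / m k := by positivity
    have hru : (0:ℝ) ≤ r * u k := mul_nonneg hr.le (hunn k)
    rw [htdef]
    have h1 : (H / m k)^2 + r^2 * (u k)^2 ≤ (H / m k + r * u k)^2 := by
      nlinarith [mul_nonneg hpr hru]
    calc Real.sqrt ((H / m k)^2 + r^2 * (u k)^2) ≤ Real.sqrt ((H / m k + r * u k)^2) :=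
          Real.sqrt_le_sqrt h1
      _ = H / m k + r * u k := Real.sqrt_sq (add_nonneg hpr hru)
  have hmcast : Tendsto (fun k => (m k : ℝ)) atTop atTop := tendsto_natCast_atTop_atTop.comp hm
  have hncast : Tendsto (fun k => (n k : ℝ)) atTop atTop := tendsto_natCast_atTop_atTop.comp hn
  have hHm : Tendsto (fun k => H / (m k : ℝ)) atTop (nhds 0) :=
    Tendsto.div_atTop tendsto_const_nhds hmcast
  have hn2 : Tendsto (fun k => 2 * (n k : ℝ)^2) atTop atTop := by
    apply Tendsto.const_mul_atTop two_pos
    exact (tendsto_pow_atTop (two_ne_zero)).comp hncast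
  have huz : Tendsto u atTop (nhds 0) := by
    apply squeeze_zero' (Eventually.of_forall hunn)
    · filter_upwards [hn.eventually_ge_atTop 1] with k hk
      exact (one_sub_cos_bounds (n k) hk).2
    · exact Tendsto.div_atTop tendsto_const_nhds hn2
  have htz : Tendsto t atTop (nhds 0) := by
    apply squeeze_zero' (Eventually.of_forall htnn) (Eventually.of_forall htub)
    have := hHm.add (huz.const_mul r)
    simpa using this
  constructor
  · -- R → 0 ⇒ m/n² → 0
    intro hR
    set X : ℕ → ℝ := fun k => (m k : ℝ) * u k with hX
    have hXnn : ∀ k, 0 ≤ X k := fun k => mul_nonneg (Nat.cast_nonneg _) (hunn k)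
    have hq : Tendsto (fun k => (b k)^2 / (8 * t k)) atTop (nhds 0) := by
      apply squeeze_zero' ?_ ?_ hR
      · filter_upwards [htpos] with k hk; positivity
      · filter_upwards [htpos] with k hk
        rw [hRval k]
        have h0 : (0:ℝ) ≤ t k / 2 := by positivity
        linarith
    set f : ℕ → ℝ := fun k => r^2 * X k / (2 * (H + r * X k)) with hfdef
    have hfnn : ∀ k, 0 ≤ f k := fun k => by
      have := hXnn k
      have h2 : (0:ℝ) < H + r * X k := by positivity
      positivity
    have hflb : ∀ᶠ k in atTop, f k ≤ (b k)^2 / (8 * t k) := by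
      filter_upwards [hmev, hnev, htpos] with k hk1 hk2 hk3
      have hm0 : (0:ℝ) < m k := by exact_mod_cast hk1
      have hn0 : (0:ℝ) < n k := by
        have : (0:ℕ) < n k := by omega
        exact_mod_cast this
      have hcosnn : 0 ≤ Real.cos (π / n k) := by
        apply Real.cos_nonneg_of_mem_Icc
        constructor
        · have h3 : 0 ≤ π / (n k:ℝ) := by positivity
          linarith [pi_pos]
        · rw [div_le_div_iff₀ hn0 two_pos]
          have h4 : (2:ℝ) ≤ n k := by exact_mod_cast hk2
          nlinarith [pi_pos]
      have hb2 : 4 * r^2 * u k ≤ (b k)^2 := by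
        have hsin : Real.sin (π / n k)^2 = u k * (1 + Real.cos (π / n k)) := by
          have := Real.sin_sq_add_cos_sq (π / (n k:ℝ))
          simp only [hu]; nlinarith
        have hbe : (b k)^2 = 4 * r^2 * (Real.sin (π / n k))^2 := by rw [hbdef]; ring
        rw [hbe, hsin]
        nlinarith [mul_nonneg (mul_nonneg (by positivity : (0:ℝ) ≤ 4 * r^2) (hunn k)) hcosnn]
      have hXden : (0:ℝ) < H + r * X k := by
        have := hXnn k; positivity
      have htub' : t k ≤ (H + r * X k) / m k := by
        calc t k ≤ H / m k + r * u k := htub k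
          _ = (H + r * ((m k:ℝ) * u k)) / m k := by field_simp
          _ = (H + r * X k) / m k := by rw [hX]
      calc f k = (4 * r^2 * u k) / (8 * ((H + r * X k) / m k)) := by
            rw [hfdef, hX]
            rw [div_eq_div_iff (by positivity) (by positivity)]
            field_simp
            ring
        _ ≤ (b k)^2 / (8 * t k) := by
            gcongr
    have hf0 : Tendsto f atTop (nhds 0) :=
      squeeze_zero' (Eventually.of_forall hfnn) hflb hq
    have hflt : ∀ᶠ k in atTop, f k < r / 4 :=
      hf0.eventually (eventually_lt_nhds (by positivity))
    have hXle : ∀ᶠ k in atTop, X k ≤ (4 * H / r^2) * f k := by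
      filter_upwards [hflt] with k hk
      have hXnnk := hXnn k
      have hden : (0:ℝ) < H + r * X k := by positivity
      have hEq : r^2 * X k = f k * (2 * (H + r * X k)) := by
        rw [hfdef]
        field_simp
      have hrX : r * X k < H := by nlinarith
      have hkey : r^2 * X k ≤ 4 * f k * H := by nlinarith [hfnn k]
      rw [div_mul_eq_mul_div, le_div_iff₀ (by positivity : (0:ℝ) < r^2)]
      nlinarith
    have hXz : Tendsto X atTop (nhds 0) := by
      apply squeeze_zero' (Eventually.of_forall hXnn) hXle
      have := hf0.const_mul (4 * H / r^2)
      simpa using this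
    exact hXY.1 hXz
  · -- m/n² → 0 ⇒ R → 0
    intro hY
    have hCY : Tendsto (fun k => (r^2 * π^2 / (2 * H)) * ((m k:ℝ) / (n k:ℝ)^2)) atTop
        (nhds 0) := by simpa using hY.const_mul (r^2 * π^2 / (2 * H))
    have hterm2 : Tendsto (fun k => (b k)^2 / (8 * t k)) atTop (nhds 0) := by
      apply squeeze_zero' ?_ ?_ hCY
      · filter_upwards [htpos] with k hk; positivity
      · filter_upwards [hmev, hn.eventually_ge_atTop 1, htpos] with k hk1 hk2 hk3
        have hm0 : (0:ℝ) < m k := by exact_mod_cast hk1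
        have hn0 : (0:ℝ) < n k := by exact_mod_cast hk2
        have hb2ub : (b k)^2 ≤ 4 * r^2 * (π / (n k:ℝ))^2 := by
          have hs := Real.sin_sq_le_sq (x := π / (n k:ℝ))
          calc (b k)^2 = 4 * r^2 * (Real.sin (π / n k))^2 := by rw [hbdef]; ring
            _ ≤ 4 * r^2 * (π / (n k:ℝ))^2 := by nlinarith [sq_nonneg r]
        have hHmpos : (0:ℝ) < H / m k := by positivity
        calc (b k)^2 / (8 * t k) ≤ (4 * r^2 * (π / (n k:ℝ))^2) / (8 * (H / m k)) := by
              gcongr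
              exact htlb k
          _ = (r^2 * π^2 / (2 * H)) * ((m k:ℝ) / (n k:ℝ)^2) := by
              field_simp
              ring
    have hsum : Tendsto (fun k => t k / 2 + (b k)^2 / (8 * t k)) atTop (nhds 0) := by
      have := (htz.div_const 2).add hterm2
      simpa using this
    exact hsum.congr fun k => (hRval k).symm


end SchwarzAux

/-- **equivalence in Schwarz's example.** For `r, H > 0` and sequences of
positive integers `m_k, n_k → ∞`, the following are equivalent:
(a) the inscribed polygonal areas satisfy `A_E(m_k, n_k) → 2πrH`;
(b) `m_k/n_k² → 0`;
(c) the circumradii of the constituent isosceles triangles satisfy `R(m_k, n_k) → 0`. -/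
theorem schwarz_equivalence (r H : ℝ) (hr : 0 < r) (hH : 0 < H)
    (m n : ℕ → ℕ) (hm : Tendsto m atTop atTop) (hn : Tendsto n atTop atTop) :
    (Tendsto (fun k => schwarzArea r H (m k) (n k)) atTop (nhds (2 * π * r * H)) ↔
      Tendsto (fun k => (m k : ℝ) / (n k : ℝ)^2) atTop (nhds 0)) ∧
    (Tendsto (fun k => schwarzCircumradius r H (m k) (n k)) atTop (nhds 0) ↔
      Tendsto (fun k => (m k : ℝ) / (n k : ℝ)^2) atTop (nhds 0)) := by
  have hXY := tendsto_X_iff_Y m n hn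
  constructor
  · rw [area_iff_X r H hr hH m n hm hn]
    exact hXY
  · exact circ_iff_XY r H hr hH m n hm hn hXY
end
end
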